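/- Let X be a scheme, D and D' effective Cartier divisors, and s a stable Frobenius splitting of X along (p−1)D + D' of degree 1. Then there exists a stable Frobenius splitting of X along D' of degree 1 which compatibly splits the closed subscheme of X defined by D. -/
import Mathlib


/-- (Affine model: effective Cartier divisors `D`, `D'` on
`X = Spec R` are given by regular elements `d`, `d' ∈ R`; the divisor
`(p−1)D + D'` corresponds to `d^(p−1) ⬝ d'`; a stable Frobenius splitting of `X`
along an effective Cartier divisor `E` of degree `1` is an additive,
`p`-semilinear map `s : R → R` sending the canonical section of `E` to `1`.)

If `s` is a stable Frobenius splitting of `X` along `(p−1)D + D'` of degree `1`,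
then there exists a stable Frobenius splitting of `X` along `D'` of degree `1`
which compatibly splits the closed subscheme of `X` defined by `D`, i.e. the
subscheme with ideal `(d)`: no component of that subscheme lies in the support
of `D'` and the splitting maps the ideal `(d)` into itself. -/
theorem stmt_7 (p : ℕ) (hp : p.Prime) (R : Type*) [CommRing R] [CharP R p]
    (d d' : R) (hd : d ∈ nonZeroDivisors R) (hd' : d' ∈ nonZeroDivisors R)
    (s : R → R)
    (hadd : ∀ a b : R, s (a + b) = s a + s b)
    (hsemi : ∀ a b : R, s (a ^ p * b) = a * s b)
    (hcan : s (d ^ (p - 1) * d') = 1) :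
    ∃ s' : R → R, (∀ a b : R, s' (a + b) = s' a + s' b) ∧
      (∀ a b : R, s' (a ^ p * b) = a * s' b) ∧
      s' d' = 1 ∧
      (∀ P ∈ (Ideal.span {d}).minimalPrimes, d' ∉ P) ∧
      (∀ a ∈ Ideal.span ({d} : Set R), s' a ∈ Ideal.span ({d} : Set R)) := by
  have hp1 : p - 1 + 1 = p := Nat.succ_pred_eq_of_pos hp.pos
  set s' : R → R := fun a => s (d ^ (p - 1) * a) with hs'
  have hadd' : ∀ a b : R, s' (a + b) = s' a + s' b := by
    intro a b; simp only [hs', mul_add, hadd]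
  have hsemi' : ∀ a b : R, s' (a ^ p * b) = a * s' b := by
    intro a b
    have h : d ^ (p - 1) * (a ^ p * b) = a ^ p * (d ^ (p - 1) * b) := by ring
    simp only [hs', h, hsemi]
  have hcan' : s' d' = 1 := hcan
  have hideal : ∀ a ∈ Ideal.span ({d} : Set R), s' a ∈ Ideal.span ({d} : Set R) := by
    intro a ha
    obtain ⟨c, hc⟩ := Ideal.mem_span_singleton.mp ha
    have h2 : d ^ p = d ^ (p - 1) * d := by
      conv_lhs => rw [← hp1]
      rw [pow_succ]
    have h : d ^ (p - 1) * a = d ^ p * c := by rw [hc, h2]; ring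
    show s (d ^ (p - 1) * a) ∈ _
    rw [h, hsemi]
    exact Ideal.mem_span_singleton.mpr ⟨s c, rfl⟩
  -- iterated semilinearity
  have hiter : ∀ (k : ℕ) (a b : R), s'^[k] (a ^ p ^ k * b) = a * s'^[k] b := by
    intro k
    induction k with
    | zero => intro a b; simp
    | succ k ih =>
      intro a b
      rw [Function.iterate_succ_apply, Function.iterate_succ_apply]
      have h1 : a ^ p ^ (k + 1) * b = (a ^ p ^ k) ^ p * b := by
        rw [← pow_mul, pow_succ]
      rw [h1, hsemi', ih]
  -- iterated ideal preservation
  have hiterideal : ∀ (k : ℕ) (a : R), a ∈ Ideal.span ({d} : Set R) →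
      s'^[k] a ∈ Ideal.span ({d} : Set R) := by
    intro k
    induction k with
    | zero => intro a ha; simpa using ha
    | succ k ih =>
      intro a ha
      rw [Function.iterate_succ_apply]
      exact ih _ (hideal a ha)
  -- the geometric-sum exponents
  set e : ℕ → ℕ := fun k => Nat.rec 0 (fun _ m => p * m + 1) k with he
  have he0 : e 0 = 0 := rfl
  have hesucc : ∀ k, e (k + 1) = p * e k + 1 := fun k => rfl
  have hege : ∀ k, k ≤ e k := by
    intro k
    induction k with
    | zero => simp [he0]
    | succ k ih =>
      rw [hesucc]
      have : e k ≤ p * e k := Nat.le_mul_of_pos_left _ hp.pos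
      omega
  have hcaniter : ∀ k, s'^[k] (d' ^ e k) = 1 := by
    intro k
    induction k with
    | zero => simp [he0]
    | succ k ih =>
      rw [Function.iterate_succ_apply, hesucc]
      have h1 : d' ^ (p * e k + 1) = (d' ^ e k) ^ p * d' := by
        rw [pow_succ, ← pow_mul, mul_comm (e k) p]
      rw [h1, hsemi', hcan', mul_one, ih]
  refine ⟨s', hadd', hsemi', hcan', ?_, hideal⟩
  intro P hP hd'P
  haveI hPp : P.IsPrime := hP.1.1
  have hdP : Ideal.span ({d} : Set R) ≤ P := hP.1.2
  -- Step 1: find u ∉ P and n with u * d'^n ∈ (d), via localization at P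
  obtain ⟨u, hu, n, hun⟩ : ∃ u ∉ P, ∃ n : ℕ, u * d' ^ n ∈ Ideal.span ({d} : Set R) := by
    set RP := Localization.AtPrime P
    set φ := algebraMap R RP with hφ
    set J := (Ideal.span ({d} : Set R)).map φ with hJ
    have hrad : φ d' ∈ J.radical := by
      rw [Ideal.radical_eq_sInf, Ideal.mem_sInf]
      rintro Q' ⟨hJQ', hQ'p⟩
      set Q := Q'.comap φ with hQ
      haveI : Q.IsPrime := Ideal.IsPrime.comap φ
      have hQle : Q ≤ P := by
        intro x hx
        by_contra hxP
        have hunit := IsLocalization.map_units RP (⟨x, hxP⟩ : P.primeCompl)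
        exact hQ'p.1 (Q'.eq_top_of_isUnit_mem hx hunit)
      have hdQ : Ideal.span ({d} : Set R) ≤ Q := by
        rw [Ideal.span_le, Set.singleton_subset_iff]
        exact Ideal.mem_comap.mpr (hJQ' (Ideal.mem_map_of_mem φ
          (Ideal.subset_span rfl)))
      have : P ≤ Q := hP.2 ⟨inferInstance, hdQ⟩ hQle
      exact this hd'P
    obtain ⟨n, hn⟩ := Ideal.mem_radical_iff.mp hrad
    rw [← map_pow] at hn
    obtain ⟨⟨⟨x, hx⟩, ⟨v, hv⟩⟩, hxv⟩ :=
      (IsLocalization.mem_map_algebraMap_iff P.primeCompl RP).mp hn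
    simp only at hxv
    rw [← map_mul] at hxv
    obtain ⟨⟨w, hw⟩, hweq⟩ := (IsLocalization.eq_iff_exists P.primeCompl RP).mp hxv
    refine ⟨w * v, fun h => ?_, n, ?_⟩
    · rcases hPp.mem_or_mem h with h' | h'
      · exact hw h'
      · exact hv h'
    · have : w * v * d' ^ n = w * x := by rw [← hweq]; ring
      rw [this]
      exact Ideal.mul_mem_left _ _ hx
  -- Step 2: contradiction via iteration
  have hmem : u ^ p ^ n * d' ^ e n ∈ Ideal.span ({d} : Set R) := by
    have h1 : u ^ p ^ n * d' ^ e n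
        = u ^ (p ^ n - 1) * d' ^ (e n - n) * (u * d' ^ n) := by
      have hpn : 1 ≤ p ^ n := Nat.one_le_pow _ _ hp.pos
      have hen : n ≤ e n := hege n
      rw [mul_mul_mul_comm, ← pow_succ, ← pow_add]
      rw [Nat.sub_add_cancel hpn, Nat.sub_add_cancel hen]
    rw [h1]
    exact Ideal.mul_mem_left _ _ hun
  have hfin : s'^[n] (u ^ p ^ n * d' ^ e n) = u := by
    rw [hiter, hcaniter, mul_one]
  have : u ∈ P := by
    rw [← hfin]
    exact hdP (hiterideal n _ hmem)
  exact hu this
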